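/- Let L ≥ 1.12. The function p ↦ (p·e^{1/L} + 1 − p) · exp( −(p/2)·(1/L + 2) ) is nonincreasing on [0,1]; in particular, since its value at p = 0 equals 1, it is at most 1 for all p ∈ [0,1]. -/

import Mathlib

/-- Numeric bound: `exp (25/28) ≤ 2.4456`. -/
lemma exp_25_28_le : Real.exp (25 / 28) ≤ 2.4456 := by
  have h1 : (1 : ℝ) + 3 / 112 ≤ Real.exp (3 / 112) := by
    have := Real.add_one_le_exp ((3 : ℝ) / 112)
    linarith
  have h2 : Real.exp (3 / 28) = (Real.exp (3 / 112)) ^ 4 := by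
    rw [← Real.exp_nat_mul]
    norm_num
  have h3 : ((115 : ℝ) / 112) ^ 4 ≤ Real.exp (3 / 28) := by
    rw [h2]
    have : ((115 : ℝ) / 112) ^ 4 ≤ (Real.exp (3 / 112)) ^ 4 := by
      apply pow_le_pow_left₀ (by norm_num)
      linarith
    linarith
  have h4 : Real.exp 1 < 2.7182818286 := Real.exp_one_lt_d9
  have h5 : Real.exp (25 / 28) * Real.exp (3 / 28) = Real.exp 1 := by
    rw [← Real.exp_add]; norm_num
  have hpos : (0 : ℝ) < Real.exp (25 / 28) := Real.exp_pos _
  nlinarith [Real.exp_pos ((3 : ℝ) / 28)]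

/-- For `0 ≤ x ≤ 25/28` we have `exp x ≤ 2 + x/2`. -/
lemma exp_le_two_add_half (x : ℝ) (hx0 : 0 ≤ x) (hx : x ≤ 25 / 28) :
    Real.exp x ≤ 2 + x / 2 := by
  have h1 : Real.exp (25 / 28) = Real.exp x * Real.exp (25 / 28 - x) := by
    rw [← Real.exp_add]; ring_nf
  have h2 : (1 : ℝ) + (25 / 28 - x) ≤ Real.exp (25 / 28 - x) := by
    have := Real.add_one_le_exp (25 / 28 - x)
    linarith
  have h3 : (1 : ℝ) ≤ Real.exp x := Real.one_le_exp hx0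
  have h4 : Real.exp (25 / 28) ≤ 2.4456 := exp_25_28_le
  nlinarith [Real.exp_pos x]

/-- For L ≥ 1.12 the function p ↦ (p e^{1/L} + 1 − p) exp(−(p/2)(1/L + 2)) is
nonincreasing on [0,1], and hence at most 1 there (its value at p = 0 is 1). -/
theorem phi_at_right_endpoint_antitone (L : ℝ) (hL : 1.12 ≤ L) :
    AntitoneOn
      (fun p : ℝ => (p * Real.exp (1 / L) + 1 - p) * Real.exp (-(p / 2) * (1 / L + 2)))
      (Set.Icc 0 1) ∧
    ∀ p ∈ Set.Icc (0 : ℝ) 1,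
      (p * Real.exp (1 / L) + 1 - p) * Real.exp (-(p / 2) * (1 / L + 2)) ≤ 1 := by
  set E := Real.exp (1 / L) with hE
  have hLpos : (0 : ℝ) < L := by linarith
  have hxpos : (0 : ℝ) < 1 / L := by positivity
  have hxle : (1 : ℝ) / L ≤ 25 / 28 := by
    rw [div_le_div_iff₀ hLpos (by norm_num)]
    linarith
  have hkey : E ≤ 2 + (1 / L) / 2 := by
    have := exp_le_two_add_half (1 / L) hxpos.le hxle
    rw [hE]; linarith
  have hE1 : (1 : ℝ) ≤ E := Real.one_le_exp hxpos.le
  have hderiv : ∀ p : ℝ, HasDerivAt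
      (fun p : ℝ => (p * E + 1 - p) * Real.exp (-(p / 2) * (1 / L + 2)))
      ((E - 1) * Real.exp (-(p / 2) * (1 / L + 2)) +
        (p * E + 1 - p) * (Real.exp (-(p / 2) * (1 / L + 2)) * (-(1 / 2) * (1 / L + 2)))) p := by
    intro p
    have h1 : HasDerivAt (fun p : ℝ => p * E + 1 - p) (E - 1) p := by
      have := (((hasDerivAt_id p).mul_const E).add_const 1).sub (hasDerivAt_id p)
      simpa [Pi.sub_def] using this
    have h2 : HasDerivAt (fun p : ℝ => -(p / 2) * (1 / L + 2)) (-(1 / 2) * (1 / L + 2)) p := by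
      have heq : (fun p : ℝ => -(p / 2) * (1 / L + 2)) =
          fun p : ℝ => (-(1 / 2) * (1 / L + 2)) * p := by
        funext q; ring
      rw [heq]
      simpa using (hasDerivAt_id p).const_mul (-(1 / 2) * (1 / L + 2))
    exact h1.mul h2.exp
  have hanti : AntitoneOn
      (fun p : ℝ => (p * E + 1 - p) * Real.exp (-(p / 2) * (1 / L + 2))) (Set.Icc 0 1) := by
    apply antitoneOn_of_deriv_nonpos (convex_Icc 0 1)
    · exact fun p _ => ((hderiv p).differentiableAt).continuousAt.continuousWithinAt
    · exact fun p _ => ((hderiv p).differentiableAt).differentiableWithinAt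
    · intro p hp
      rw [interior_Icc] at hp
      rw [(hderiv p).deriv]
      have hP : (0 : ℝ) < Real.exp (-(p / 2) * (1 / L + 2)) := Real.exp_pos _
      have heq : (E - 1) * Real.exp (-(p / 2) * (1 / L + 2)) +
          (p * E + 1 - p) * (Real.exp (-(p / 2) * (1 / L + 2)) * (-(1 / 2) * (1 / L + 2))) =
          Real.exp (-(p / 2) * (1 / L + 2)) *
            ((E - 1) - (p * (E - 1) + 1) * ((1 / L + 2) / 2)) := by ring
      rw [heq]
      apply mul_nonpos_of_nonneg_of_nonpos hP.le
      have hq : (0 : ℝ) ≤ p * (E - 1) := mul_nonneg hp.1.le (by linarith)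
      nlinarith [mul_nonneg hq (by positivity : (0:ℝ) ≤ (1 / L + 2) / 2)]
  refine ⟨hanti, ?_⟩
  intro p hp
  have h0 : (0 : ℝ) ∈ Set.Icc (0 : ℝ) 1 := by constructor <;> norm_num
  have := hanti h0 hp hp.1
  simpa using this
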